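/- Let R be a range set. A subset K of R is compact in the nearly discrete metric M_R if and only if K is tenuous, i.e., K is finite or K = {0} ∪ {a_i : i ∈ ℕ} for some strictly decreasing sequence a_i → 0 in (0,∞). -/

import Mathlib

/-- The nearly discrete ultrametric on `[0,∞)`. -/
noncomputable def MR (x y : ℝ) : ℝ := if x = y then 0 else max x y

/-- A subset of `[0,∞)` is tenuous if it is finite or consists of `0` together
with a strictly decreasing positive sequence converging to `0`. -/
def Tenuous (K : Set ℝ) : Prop :=
  K.Finite ∨ ∃ a : ℕ → ℝ, StrictAnti a ∧ (∀ i, 0 < a i) ∧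
    Filter.Tendsto a Filter.atTop (nhds 0) ∧ K = {0} ∪ Set.range a

lemma MR_self (x : ℝ) : MR x x = 0 := by simp [MR]

lemma gmax_spec {S : Set ℝ} (h : ∃ m ∈ S, ∀ y ∈ S, y ≤ m) :
    sSup S ∈ S ∧ ∀ y ∈ S, y ≤ sSup S := by
  obtain ⟨m, hm, hub⟩ := h
  have hg : IsGreatest S m := ⟨hm, hub⟩
  rw [hg.csSup_eq]
  exact ⟨hm, hub⟩

lemma exists_max (S : Set ℝ) (hpos : ∀ x ∈ S, (0:ℝ) < x)
    (hfin : ∀ ε > (0:ℝ), (S ∩ Set.Ici ε).Finite) (hne : S.Nonempty) :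
    ∃ m ∈ S, ∀ y ∈ S, y ≤ m := by
  obtain ⟨x0, hx0⟩ := hne
  have hT : (S ∩ Set.Ici x0).Finite := hfin x0 (hpos x0 hx0)
  have hTne : hT.toFinset.Nonempty := by
    rw [Set.Finite.toFinset_nonempty]
    exact ⟨x0, hx0, le_refl x0⟩
  refine ⟨hT.toFinset.max' hTne, ?_, ?_⟩
  · have := hT.toFinset.max'_mem hTne
    rw [Set.Finite.mem_toFinset] at this
    exact this.1
  · intro y hy
    by_cases hyx : x0 ≤ y
    · exact hT.toFinset.le_max' y (by rw [Set.Finite.mem_toFinset]; exact ⟨hy, hyx⟩)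
    · exact le_trans (le_of_not_ge hyx)
        (hT.toFinset.le_max' x0 (by rw [Set.Finite.mem_toFinset]; exact ⟨hx0, le_refl x0⟩))

lemma const_subseq (f : ℕ → ℝ) (x : ℝ) (h : {n | f n = x}.Infinite) :
    ∃ φ : ℕ → ℕ, StrictMono φ ∧ ∀ n, f (φ n) = x :=
  ⟨Nat.nth (fun n => f n = x), Nat.nth_strictMono h,
    fun n => Nat.nth_mem_of_infinite h n⟩

lemma pigeonhole (f : ℕ → ℝ) (K : Set ℝ) (hK : K.Finite) (hf : ∀ n, f n ∈ K) :
    ∃ x ∈ K, {n | f n = x}.Infinite := by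
  by_contra h
  push_neg at h
  have hforall : ∀ x ∈ K, {n | f n = x}.Finite := by
    intro x hx
    have := h x hx
    exact this
  have : (Set.univ : Set ℕ).Finite := by
    have hsub : (Set.univ : Set ℕ) ⊆ ⋃ x ∈ K, {n | f n = x} := by
      intro n _
      exact Set.mem_biUnion (hf n) rfl
    exact (hK.biUnion hforall).subset hsub
  exact Set.infinite_univ this

theorem stmt_9 (R : Set ℝ) (hR : R ⊆ Set.Ici (0 : ℝ)) (h0 : (0 : ℝ) ∈ R)
    (K : Set ℝ) (hKR : K ⊆ R) :
    (∀ f : ℕ → ℝ, (∀ n, f n ∈ K) →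
      ∃ x ∈ K, ∃ φ : ℕ → ℕ, StrictMono φ ∧
        ∀ ε > (0 : ℝ), ∃ N, ∀ n ≥ N, MR (f (φ n)) x < ε) ↔
    Tenuous K := by
  have hK0 : ∀ x ∈ K, (0:ℝ) ≤ x := fun x hx => hR (hKR hx)
  constructor
  · intro H
    by_cases hfinK : K.Finite
    · exact Or.inl hfinK
    right
    have hKinf : K.Infinite := hfinK
    -- key: injective sequences in K force a limit 0 and 0 ∈ K
    have key : ∀ g : ℕ → ℝ, Function.Injective g → (∀ n, g n ∈ K) →
        (0:ℝ) ∈ K ∧ ∀ ε > (0:ℝ), ∃ n, g n < ε := by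
      intro g hg hgK
      obtain ⟨x, hxK, φ, hφ, hconv⟩ := H g hgK
      have hx0 : x = 0 := by
        by_contra hx
        have hxpos : 0 < x := lt_of_le_of_ne (hK0 x hxK) (Ne.symm hx)
        obtain ⟨N, hN⟩ := hconv x hxpos
        have eq1 : g (φ N) = x := by
          by_contra hne
          have h1 := hN N le_rfl
          rw [MR, if_neg hne] at h1
          exact absurd (le_max_right (g (φ N)) x) (not_le.mpr h1)
        have eq2 : g (φ (N+1)) = x := by
          by_contra hne
          have h1 := hN (N+1) (Nat.le_succ N)
          rw [MR, if_neg hne] at h1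
          exact absurd (le_max_right (g (φ (N+1))) x) (not_le.mpr h1)
        have : φ N = φ (N+1) := hg (eq1.trans eq2.symm)
        have : N = N + 1 := hφ.injective this
        omega
      subst hx0
      refine ⟨hxK, fun ε hε => ?_⟩
      obtain ⟨N, hN⟩ := hconv ε hε
      refine ⟨φ N, ?_⟩
      have h1 := hN N le_rfl
      by_cases hz : g (φ N) = 0
      · rw [hz]; exact hε
      · rw [MR, if_neg hz] at h1
        exact lt_of_le_of_lt (le_max_left _ _) h1
    have h0K : (0:ℝ) ∈ K := by
      let e := hKinf.natEmbedding
      exact (key (fun n => (e n : ℝ))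
        (fun m n hmn => e.injective (Subtype.coe_injective hmn))
        (fun n => (e n).2)).1
    have hfinIci : ∀ ε > (0:ℝ), (K ∩ Set.Ici ε).Finite := by
      intro ε hε
      by_contra hinf
      have hinf' : (K ∩ Set.Ici ε).Infinite := hinf
      let e := hinf'.natEmbedding
      obtain ⟨-, hlim⟩ := key (fun n => (e n : ℝ))
        (fun m n hmn => e.injective (Subtype.coe_injective hmn))
        (fun n => (e n).2.1)
      obtain ⟨n, hn⟩ := hlim ε hε
      exact absurd (e n).2.2 (not_le.mpr hn)
    set K' : Set ℝ := K \ {0} with hK'def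
    have hK'inf : K'.Infinite := hKinf.diff (Set.finite_singleton 0)
    have hK'pos : ∀ x ∈ K', (0:ℝ) < x := by
      rintro x ⟨hxK, hx0⟩
      exact lt_of_le_of_ne (hK0 x hxK) (Ne.symm hx0)
    have hK'fin : ∀ ε > (0:ℝ), (K' ∩ Set.Ici ε).Finite := by
      intro ε hε
      exact (hfinIci ε hε).subset (fun x hx => ⟨hx.1.1, hx.2⟩)
    -- the enumeration
    set a : ℕ → ℝ := fun n =>
      Nat.rec (sSup K') (fun _ b => sSup (K' ∩ Set.Iio b)) n with ha_def
    have ha0 : a 0 ∈ K' ∧ ∀ y ∈ K', y ≤ a 0 :=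
      gmax_spec (exists_max K' hK'pos hK'fin hK'inf.nonempty)
    have hstep : ∀ n, a n ∈ K' →
        (a (n+1) ∈ K' ∧ a (n+1) < a n ∧ ∀ y ∈ K', y < a n → y ≤ a (n+1)) := by
      intro n han
      have hSinf : (K' ∩ Set.Iio (a n)).Infinite := by
        have hsub : K' \ (K' ∩ Set.Ici (a n)) ⊆ K' ∩ Set.Iio (a n) := by
          rintro y ⟨hy, hny⟩
          refine ⟨hy, ?_⟩
          by_contra hlt
          exact hny ⟨hy, (not_lt.mp hlt : a n ≤ y)⟩
        exact (hK'inf.diff (hK'fin (a n) (hK'pos _ han))).mono hsub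
      have hSpos : ∀ x ∈ K' ∩ Set.Iio (a n), (0:ℝ) < x := fun x hx => hK'pos x hx.1
      have hSfin : ∀ ε > (0:ℝ), ((K' ∩ Set.Iio (a n)) ∩ Set.Ici ε).Finite := by
        intro ε hε
        exact (hK'fin ε hε).subset (fun x hx => ⟨hx.1.1, hx.2⟩)
      have hspec := gmax_spec (exists_max _ hSpos hSfin hSinf.nonempty)
      exact ⟨hspec.1.1, hspec.1.2, fun y hy hylt => hspec.2 y ⟨hy, hylt⟩⟩
    have haK' : ∀ n, a n ∈ K' := by
      intro n
      induction n with
      | zero => exact ha0.1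
      | succ m ih => exact (hstep m ih).1
    have hanti : StrictAnti a :=
      strictAnti_nat_of_succ_lt (fun n => (hstep n (haK' n)).2.1)
    have hapos : ∀ n, 0 < a n := fun n => hK'pos _ (haK' n)
    have hupfin : ∀ ε > (0:ℝ), {n | ε ≤ a n}.Finite := by
      intro ε hε
      have hsub : {n | ε ≤ a n} ⊆ a ⁻¹' (K' ∩ Set.Ici ε) := by
        intro n hn
        exact ⟨haK' n, hn⟩
      exact ((hK'fin ε hε).preimage (hanti.injective.injOn)).subset hsub
    have htend : Filter.Tendsto a Filter.atTop (nhds 0) := by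
      rw [Metric.tendsto_atTop]
      intro ε hε
      obtain ⟨B, hB⟩ := (hupfin ε hε).bddAbove
      refine ⟨B + 1, fun n hn => ?_⟩
      have hna : a n < ε := by
        by_contra hge
        have : n ≤ B := hB (not_lt.mp hge)
        omega
      rw [Real.dist_eq, sub_zero, abs_of_pos (hapos n)]
      exact hna
    have hsurj : ∀ x ∈ K', ∃ n, a n = x := by
      intro x hx
      have hxpos : 0 < x := hK'pos x hx
      have hF : {n | x ≤ a n}.Finite := hupfin x hxpos
      have hFne : hF.toFinset.Nonempty := by
        rw [Set.Finite.toFinset_nonempty]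
        exact ⟨0, ha0.2 x hx⟩
      set N := hF.toFinset.max' hFne with hNdef
      have hNmem : x ≤ a N := by
        have := hF.toFinset.max'_mem hFne
        rwa [Set.Finite.mem_toFinset] at this
      have hNsucc : a (N + 1) < x := by
        by_contra hge
        have : N + 1 ≤ N := hF.toFinset.le_max' (N+1)
          (by rw [Set.Finite.mem_toFinset]; exact not_lt.mp hge)
        omega
      refine ⟨N, ?_⟩
      by_contra hne
      have hxlt : x < a N := lt_of_le_of_ne hNmem (fun h => hne h.symm)
      exact absurd ((hstep N (haK' N)).2.2 x hx hxlt) (not_le.mpr hNsucc)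
    refine ⟨a, hanti, hapos, htend, ?_⟩
    ext x
    constructor
    · intro hx
      by_cases hx0 : x = 0
      · exact Or.inl hx0
      · obtain ⟨n, hn⟩ := hsurj x ⟨hx, hx0⟩
        exact Or.inr ⟨n, hn⟩
    · rintro (hx | ⟨n, rfl⟩)
      · rw [Set.mem_singleton_iff] at hx
        rw [hx]; exact h0K
      · exact (haK' n).1
  · rintro hT f hf
    have const_case : ∀ x ∈ K, {n | f n = x}.Infinite →
        ∃ x ∈ K, ∃ φ : ℕ → ℕ, StrictMono φ ∧
          ∀ ε > (0 : ℝ), ∃ N, ∀ n ≥ N, MR (f (φ n)) x < ε := by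
      intro x hxK hinf
      obtain ⟨φ, hφ, hval⟩ := const_subseq f x hinf
      refine ⟨x, hxK, φ, hφ, fun ε hε => ⟨0, fun n _ => ?_⟩⟩
      rw [hval n, MR_self]
      exact hε
    rcases hT with hfin | ⟨a, hanti, hapos, htend, hKeq⟩
    · obtain ⟨x, hxK, hinf⟩ := pigeonhole f K hfin hf
      exact const_case x hxK hinf
    · by_cases hfib : ∃ x ∈ K, {n | f n = x}.Infinite
      · obtain ⟨x, hxK, hinf⟩ := hfib
        exact const_case x hxK hinf
      · push_neg at hfib
        have hfibF : ∀ x ∈ K, {n | f n = x}.Finite := by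
          intro x hx
          have := hfib x hx
          exact this
        have h0K : (0:ℝ) ∈ K := by
          rw [hKeq]; exact Or.inl rfl
        refine ⟨0, h0K, id, strictMono_id, fun ε hε => ?_⟩
        -- K ∩ [ε, ∞) is finite
        have hSfin : (K ∩ Set.Ici ε).Finite := by
          rw [Metric.tendsto_atTop] at htend
          obtain ⟨M, hM⟩ := htend ε hε
          have hsub : K ∩ Set.Ici ε ⊆ a '' (Set.Iio M) := by
            rintro x ⟨hxK, hxε⟩
            rw [hKeq] at hxK
            rcases hxK with hx0 | ⟨i, hi⟩
            · rw [Set.mem_singleton_iff] at hx0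
              rw [hx0] at hxε
              exact absurd hxε (not_le.mpr hε)
            · refine ⟨i, ?_, hi⟩
              by_contra hge
              have := hM i (not_lt.mp hge)
              rw [Real.dist_eq, sub_zero, abs_of_pos (hapos i)] at this
              rw [hi] at this
              exact absurd hxε (not_le.mpr this)
          exact ((Set.finite_Iio M).image a).subset hsub
        have hFfin : {n | ε ≤ f n}.Finite := by
          have hsub : {n | ε ≤ f n} ⊆ ⋃ x ∈ K ∩ Set.Ici ε, {n | f n = x} := by
            intro n hn
            exact Set.mem_biUnion ⟨hf n, hn⟩ rfl
          exact (hSfin.biUnion (fun x hx => hfibF x hx.1)).subset hsub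
        obtain ⟨B, hB⟩ := hFfin.bddAbove
        refine ⟨B + 1, fun n hn => ?_⟩
        have hfn : f n < ε := by
          by_contra hge
          have : n ≤ B := hB (not_lt.mp hge)
          omega
        show MR (f n) 0 < ε
        by_cases hz : f n = 0
        · rw [hz, MR_self]; exact hε
        · rw [MR, if_neg hz]
          exact max_lt hfn hε
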